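/- Let P be symmetric positive definite, D₁ = P⁻¹Q with Q + Qᵀ = B, and D₂ = P⁻¹(B D₁ - D₁ᵀ P D₁). Then the semi-discrete heat equation d/dt u = β D₂ u with β ≥ 0 satisfies d/dt (uᵀ P u) = 2β uᵀ B D₁ u - 2β (D₁u)ᵀ P (D₁u). -/

import Mathlib

open Matrix

theorem stmt2 (N : ℕ) (hN : 2 ≤ N) (P Q : Matrix (Fin N) (Fin N) ℝ)
    (hP : P.PosDef)
    (B : Matrix (Fin N) (Fin N) ℝ)
    (hBdef : B = Matrix.diagonal (fun i : Fin N =>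
      if (i : ℕ) = 0 then (-1 : ℝ) else if (i : ℕ) = N - 1 then 1 else 0))
    (hB : Q + Qᵀ = B)
    (D₁ D₂ : Matrix (Fin N) (Fin N) ℝ)
    (hD₁ : D₁ = P⁻¹ * Q)
    (hD₂ : D₂ = P⁻¹ * (B * D₁ - D₁ᵀ * P * D₁))
    (β : ℝ) (hβ : 0 ≤ β)
    (u : ℝ → Fin N → ℝ)
    (hu : ∀ t, HasDerivAt u (β • (D₂ *ᵥ u t)) t) :
    ∀ t, HasDerivAt (fun s => u s ⬝ᵥ (P *ᵥ u s))
      (2 * β * (u t ⬝ᵥ (B *ᵥ (D₁ *ᵥ u t)))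
        - 2 * β * ((D₁ *ᵥ u t) ⬝ᵥ (P *ᵥ (D₁ *ᵥ u t)))) t := by
  intro t
  set u' : Fin N → ℝ := β • (D₂ *ᵥ u t) with hu'
  have h1 : ∀ i, HasDerivAt (fun s => u s i) (u' i) t := hasDerivAt_pi.mp (hu t)
  have hdot : HasDerivAt (fun s => u s ⬝ᵥ (P *ᵥ u s))
      (u' ⬝ᵥ (P *ᵥ u t) + u t ⬝ᵥ (P *ᵥ u')) t := by
    have heq : (fun s => u s ⬝ᵥ (P *ᵥ u s))
        = fun s => ∑ i, ∑ j, u s i * (P i j * u s j) := by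
      funext s; simp [dotProduct, mulVec, Finset.mul_sum]
    rw [heq]
    have : HasDerivAt (fun s => ∑ i, ∑ j, u s i * (P i j * u s j))
        (∑ i, ∑ j, (u' i * (P i j * u t j) + u t i * (P i j * u' j))) t := by
      apply HasDerivAt.fun_sum; intro i _
      apply HasDerivAt.fun_sum; intro j _
      exact (h1 i).mul ((h1 j).const_mul (P i j))
    convert this using 1
    simp [dotProduct, mulVec, Finset.sum_add_distrib, Finset.mul_sum, Finset.sum_mul,
      mul_assoc, mul_comm, mul_left_comm]
  convert hdot using 1
  have hPsymm : Pᵀ = P := hP.isHermitian.eq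
  have hPD₂ : P * D₂ = B * D₁ - D₁ᵀ * P * D₁ := by
    rw [hD₂, ← Matrix.mul_assoc, Matrix.mul_nonsing_inv P (isUnit_iff_ne_zero.2 hP.det_pos.ne'), Matrix.one_mul]
  have hPu' : P *ᵥ u' = β • ((B * D₁ - D₁ᵀ * P * D₁) *ᵥ u t) := by
    rw [hu', Matrix.mulVec_smul, Matrix.mulVec_mulVec, hPD₂]
  have hvm : u' ᵥ* P = P *ᵥ u' := by
    rw [← hPsymm, Matrix.vecMul_transpose, hPsymm]
  have hsym : u' ⬝ᵥ (P *ᵥ u t) = u t ⬝ᵥ (P *ᵥ u') := by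
    rw [Matrix.dotProduct_mulVec, hvm, dotProduct_comm]
  rw [hsym, hPu']
  have hsplit : ((B * D₁ - D₁ᵀ * P * D₁) *ᵥ u t)
      = B *ᵥ (D₁ *ᵥ u t) - D₁ᵀ *ᵥ (P *ᵥ (D₁ *ᵥ u t)) := by
    rw [Matrix.sub_mulVec, Matrix.mulVec_mulVec, Matrix.mulVec_mulVec,
      Matrix.mulVec_mulVec, Matrix.mul_assoc]
  have htr : u t ⬝ᵥ (D₁ᵀ *ᵥ (P *ᵥ (D₁ *ᵥ u t)))
      = (D₁ *ᵥ u t) ⬝ᵥ (P *ᵥ (D₁ *ᵥ u t)) := by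
    rw [Matrix.dotProduct_mulVec, Matrix.vecMul_transpose]
  rw [hsplit, dotProduct_smul, dotProduct_sub, htr]
  simp only [smul_eq_mul]
  ring
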